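/- Adjoint of the operator F with boundary observation part (Theorem 5.8, reformulated via Riesz representatives): For each w ∈ V let ξ_w ∈ Y be the unique element with ⟨ξ_w | Gv⟩_Y = ⟨w | Cv⟩_V for all v ∈ D(G). Then for (ζ,w) ∈ Y ⊕ V one has (ζ,w) ∈ D(F*) if and only if ζ − ξ_w ∈ D(G*), and in that case F*(ζ,w) = G*(ξ_w − ζ). Here F* denotes the Hilbert-space adjoint of F, i.e. (ζ,w) ∈ D(F*) with F*(ζ,w) = h exactly when ⟨Fv | (ζ,w)⟩_{Y⊕V} = ⟨v | h⟩_X for all v ∈ D(G). -/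

import Mathlib

open scoped ComplexInnerProductSpace LinearPMap

/-- The operator `F : D(G) ⊆ X → Y ⊕ V`, `F v = (−G v, C v)`, where `Y ⊕ V` carries the
Hilbert space (`ℓ²`) product structure. -/
noncomputable def Fop {X Y V : Type*}
    [NormedAddCommGroup X] [InnerProductSpace ℂ X]
    [NormedAddCommGroup Y] [InnerProductSpace ℂ Y]
    [NormedAddCommGroup V] [InnerProductSpace ℂ V]
    (G : X →ₗ.[ℂ] Y) (C : G.domain →ₗ[ℂ] V) :
    X →ₗ.[ℂ] WithLp 2 (Y × V) where
  domain := G.domain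
  toFun := (WithLp.linearEquiv 2 ℂ (Y × V)).symm.toLinearMap ∘ₗ ((-G.toFun).prod C)

/-- **Adjoint of the operator `F` with boundary observation part** (reformulated via Riesz
representatives).  Let `G : D(G) ⊆ X → Y` be densely defined, closed and bijective onto `Y`
with bounded inverse, `C : D(G) → V` linear and graph-bounded, and `F v := (−G v, C v)`.
For `w ∈ V` let `ξ_w ∈ Y` satisfy `⟨ξ_w | Gv⟩_Y = ⟨w | Cv⟩_V` for all `v ∈ D(G)`.  Then
`(ζ, w) ∈ D(F*)` iff `ζ − ξ_w ∈ D(G*)`, and in that case `F*(ζ,w) = G*(ξ_w − ζ)`. -/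
theorem stmt3
    {X Y V : Type*}
    [NormedAddCommGroup X] [InnerProductSpace ℂ X] [CompleteSpace X]
    [NormedAddCommGroup Y] [InnerProductSpace ℂ Y] [CompleteSpace Y]
    [NormedAddCommGroup V] [InnerProductSpace ℂ V] [CompleteSpace V]
    (G : X →ₗ.[ℂ] Y)
    (hdense : Dense (G.domain : Set X))
    (hclosed : G.IsClosed)
    (hinj : ∀ x y : G.domain, G x = G y → x = y)
    (hsurj : ∀ y : Y, ∃ x : G.domain, G x = y)
    (hbdd_inv : ∃ Cg : ℝ, ∀ x : G.domain, ‖(x : X)‖ ≤ Cg * ‖G x‖)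
    (C : G.domain →ₗ[ℂ] V)
    (hC : ∃ c : ℝ, ∀ v : G.domain, ‖C v‖ ≤ c * Real.sqrt (‖(v : X)‖ ^ 2 + ‖G v‖ ^ 2))
    (w : V) (ξ : Y)
    (hξ : ∀ v : G.domain, ⟪ξ, G v⟫ = ⟪w, C v⟫) (ζ : Y) :
    ((WithLp.equiv 2 (Y × V)).symm (ζ, w) ∈ ((Fop G C)†).domain ↔ ζ - ξ ∈ (G†).domain) ∧
    ∀ (h : (WithLp.equiv 2 (Y × V)).symm (ζ, w) ∈ ((Fop G C)†).domain)
      (h' : ξ - ζ ∈ (G†).domain),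
      (Fop G C)† ⟨(WithLp.equiv 2 (Y × V)).symm (ζ, w), h⟩ = G† ⟨ξ - ζ, h'⟩ := by
  classical
  have hdenseF : Dense ((Fop G C).domain : Set X) := hdense
  have hfa := LinearPMap.adjoint_isFormalAdjoint hdense
  -- key computation: ⟪(ζ,w), F v⟫ = ⟪ξ - ζ, G v⟫
  have key : ∀ v : G.domain,
      (inner ℂ ((WithLp.equiv 2 (Y × V)).symm (ζ, w)) ((Fop G C).toFun v) : ℂ)
        = ⟪ξ - ζ, G v⟫ := by
    intro v
    have h1 : ((Fop G C).toFun v : WithLp 2 (Y × V))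
        = (WithLp.equiv 2 (Y × V)).symm (-(G v), C v) := rfl
    rw [h1, WithLp.prod_inner_apply]
    simp only [WithLp.equiv_symm_apply, WithLp.ofLp_toLp]
    rw [← hξ v, inner_sub_left, inner_neg_right]
    ring
  -- backward direction of the membership iff
  have hback : ∀ _ : ξ - ζ ∈ (G†).domain,
      (WithLp.equiv 2 (Y × V)).symm (ζ, w) ∈ ((Fop G C)†).domain := by
    intro h'
    refine LinearPMap.mem_adjoint_domain_of_exists _ ⟨G† ⟨ξ - ζ, h'⟩, fun x => ?_⟩
    rw [hfa ⟨ξ - ζ, h'⟩ x]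
    exact (key x).symm
  have hfwd : (WithLp.equiv 2 (Y × V)).symm (ζ, w) ∈ ((Fop G C)†).domain →
      ξ - ζ ∈ (G†).domain := by
    intro h
    rw [LinearPMap.mem_adjoint_domain_iff] at h ⊢
    have h2 : Continuous fun v : G.domain =>
        (inner ℂ ((WithLp.equiv 2 (Y × V)).symm (ζ, w)) ((Fop G C).toFun v) : ℂ) := h
    have h3 : Continuous fun v : G.domain => (⟪ξ - ζ, G v⟫ : ℂ) := by
      simpa only [key] using h2
    exact h3
  constructor
  · constructor
    · intro h
      have := hfwd h
      simpa [neg_sub] using (G†).domain.neg_mem this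
    · intro h
      exact hback (by simpa [neg_sub] using (G†).domain.neg_mem h)
  · intro h h'
    refine LinearPMap.adjoint_apply_eq hdenseF _ fun x => ?_
    rw [hfa ⟨ξ - ζ, h'⟩ x]
    exact (key x).symm
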